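/- arXiv:2304.05404 — 2 statements merged into one kernel-verified Lean document; each statement's English description precedes it below -/
import Mathlib

section
/- Let V be an infinite-dimensional vector space over a field K in which every element is a square, equipped with a nondegenerate symmetric bilinear form [·,·]. Then for every finite tuple of vectors b̄ = (b₁, …, bₙ), there exists a nonzero vector u ∈ V with [u, bᵢ] = 0 for all i and [u, u] = 0. -/
/-- If every element of `K` is a square and `V` is infinite-dimensional with a
nondegenerate symmetric bilinear form, then for every finite tuple `b̄` there is
a nonzero isotropic vector orthogonal to all entries of `b̄`. -/
theorem stmt_4 {K V : Type*} [Field K] [AddCommGroup V] [Module K V]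
    (hsq : ∀ α : K, ∃ lam : K, lam ^ 2 = α)
    (Bf : LinearMap.BilinForm K V)
    (hinf : ¬ FiniteDimensional K V)
    (hsym : ∀ u v : V, Bf u v = Bf v u)
    (hnd : ∀ v : V, (∀ u : V, Bf u v = 0) → v = 0)
    (n : ℕ) (b : Fin n → V) :
    ∃ u : V, u ≠ 0 ∧ (∀ i, Bf u (b i) = 0) ∧ Bf u u = 0 := by
  classical
  -- the map collecting the pairings with the `b i`
  set f : V →ₗ[K] (Fin n → K) := LinearMap.pi (fun i => Bf.flip (b i)) with hf
  set W : Submodule K V := LinearMap.ker f with hW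
  have hmem : ∀ x : V, x ∈ W ↔ ∀ i, Bf x (b i) = 0 := by
    intro x
    simp [hW, hf, LinearMap.mem_ker, funext_iff]
  -- W is not finite dimensional
  have hWinf : ¬ FiniteDimensional K W := by
    intro hWfin
    apply hinf
    have h1 : FiniteDimensional K (LinearMap.range f) := inferInstance
    have h2 : FiniteDimensional K (V ⧸ W) :=
      Module.Finite.equiv (LinearMap.quotKerEquivRange f).symm
    have := Submodule.rank_quotient_add_rank W
    have hlt : Module.rank K V < Cardinal.aleph0 := by
      rw [← this]
      exact Cardinal.add_lt_aleph0 (Module.rank_lt_aleph0 K _) (Module.rank_lt_aleph0 K _)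
    exact Module.rank_lt_aleph0_iff.mp hlt
  -- find a nonzero vector in W
  have hWne : W ≠ ⊥ := by
    intro h
    exact hWinf (h ▸ inferInstance)
  obtain ⟨v, hvW, hv0⟩ := Submodule.exists_mem_ne_zero_of_ne_bot hWne
  -- find a vector in W outside span {v}
  have hsub : ¬ (W ≤ Submodule.span K {v}) := by
    intro hle
    exact hWinf (Submodule.finiteDimensional_of_le hle)
  obtain ⟨w, hwW, hwsp⟩ := SetLike.not_le_iff_exists.mp hsub
  by_cases ha : Bf v v = 0
  · exact ⟨v, hv0, (hmem v).mp hvW, ha⟩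
  · -- make w orthogonal to v
    set w' : V := w - (Bf w v / Bf v v) • v with hw'
    have hw'W : w' ∈ W := Submodule.sub_mem _ hwW (Submodule.smul_mem _ _ hvW)
    have hw'0 : w' ≠ 0 := by
      intro h
      apply hwsp
      rw [sub_eq_zero.mp h]
      exact Submodule.smul_mem _ _ (Submodule.mem_span_singleton_self v)
    have horth : Bf w' v = 0 := by
      simp [hw', LinearMap.sub_apply, LinearMap.smul_apply]
      field_simp
      ring
    have horth' : Bf v w' = 0 := by rw [hsym]; exact horth
    by_cases hc : Bf w' w' = 0
    · exact ⟨w', hw'0, (hmem w').mp hw'W, hc⟩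
    · obtain ⟨t, ht⟩ := hsq (-(Bf v v) / Bf w' w')
      refine ⟨v + t • w', ?_, ?_, ?_⟩
      · intro h
        apply ha
        have hv : v = -(t • w') := by
          rw [eq_neg_iff_add_eq_zero]; exact h
        calc Bf v v = Bf v (-(t • w')) := by rw [← hv]
          _ = -(t * Bf v w') := by simp
          _ = 0 := by rw [horth']; ring
      · intro i
        exact (hmem _).mp (Submodule.add_mem _ hvW (Submodule.smul_mem _ _ hw'W)) i
      · have expand : Bf (v + t • w') (v + t • w')
            = Bf v v + t * Bf v w' + t * Bf w' v + t * t * Bf w' w' := by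
          simp [map_add, LinearMap.add_apply, LinearMap.smul_apply, map_smul, smul_eq_mul]
          ring
        rw [expand, horth, horth']
        have : t * t = -(Bf v v) / Bf w' w' := by rw [← ht]; ring
        rw [this]
        field_simp
        ring
end

section
/- With the same inductive tuple extension of an independence relation as above, suppose full transitivity holds and symmetry holds for tuples of length ≤ n together with single elements (b̄ ⫝_A c̄ iff c̄ ⫝_A b̄ whenever len(b̄), len(c̄) ≤ n, and for single elements against arbitrary tuples). Then symmetry holds for tuples of length n+1: for b̄ of length ≤ n, b′ a single element, and c̄ of length ≤ n, c̄ ⫝_A b̄b′ iff b̄b′ ⫝_A c̄. -/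
/-- Inductive extension of a single-element independence relation to tuples. -/
def IndTuple {α : Type*} (Ind : α → Set α → Set α → Prop) :
    List α → Set α → Set α → Prop
  | [], _, _ => True
  | d :: ds, A, B => Ind d A B ∧ IndTuple Ind ds (A ∪ {d}) (B ∪ {d})

/-- Tuple-versus-tuple independence: `b̄ ⫝_A c̄` means `b̄ ⫝_A A ∪ c̄`. -/
def IndTT {α : Type*} (Ind : α → Set α → Set α → Prop)
    (bs : List α) (A : Set α) (cs : List α) : Prop :=
  IndTuple Ind bs A (A ∪ {x | x ∈ cs})

lemma indTuple_append {α : Type*} (Ind : α → Set α → Set α → Prop) :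
    ∀ (ds es : List α) (A B : Set α),
      IndTuple Ind (ds ++ es) A B ↔
        IndTuple Ind ds A B ∧ IndTuple Ind es (A ∪ {x | x ∈ ds}) (B ∪ {x | x ∈ ds})
  | [], es, A, B => by
      simp [IndTuple]
  | d :: ds, es, A, B => by
      simp only [List.cons_append, IndTuple]
      rw [indTuple_append Ind ds es]
      have h1 : A ∪ {d} ∪ {x | x ∈ ds} = A ∪ {x | x ∈ d :: ds} := by
        ext x; simp [or_comm, or_assoc, or_left_comm]
      have h2 : B ∪ {d} ∪ {x | x ∈ ds} = B ∪ {x | x ∈ d :: ds} := by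
        ext x; simp [or_comm, or_assoc, or_left_comm]
      rw [h1, h2]; tauto

/-- Induction step for symmetry: assuming full transitivity for tuples and
symmetry for tuples of length `≤ n` as well as symmetry of single elements
against arbitrary tuples, symmetry holds for tuples of length `n + 1`. -/
theorem stmt_16 {α : Type*} (Ind : α → Set α → Set α → Prop) (n : ℕ)
    (htrans : ∀ (ds : List α) (A B C : Set α), A ⊆ B → B ⊆ C →
      (IndTuple Ind ds A C ↔ IndTuple Ind ds A B ∧ IndTuple Ind ds B C))
    (hsymm : ∀ (bs cs : List α) (A : Set α), bs.length ≤ n → cs.length ≤ n →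
      (IndTT Ind bs A cs ↔ IndTT Ind cs A bs))
    (hsymm1 : ∀ (b : α) (cs : List α) (A : Set α),
      IndTT Ind [b] A cs ↔ IndTT Ind cs A [b]) :
    ∀ (bs : List α) (b' : α) (cs : List α) (A : Set α),
      bs.length ≤ n → cs.length ≤ n →
      (IndTT Ind cs A (bs ++ [b']) ↔ IndTT Ind (bs ++ [b']) A cs) := by
  intro bs b' cs A hb hc
  set Bs : Set α := {x | x ∈ bs} with hBs
  set Cs : Set α := {x | x ∈ cs} with hCs
  -- the big set on the left
  have hset : A ∪ {x | x ∈ bs ++ [b']} = (A ∪ Bs) ∪ {x | x ∈ [b']} := by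
    ext x; simp [hBs, or_comm, or_assoc, or_left_comm]
  -- decompose the left-hand side via transitivity
  have hL : IndTT Ind cs A (bs ++ [b']) ↔
      IndTT Ind cs A bs ∧ IndTT Ind cs (A ∪ Bs) [b'] := by
    unfold IndTT
    rw [hset]
    exact htrans cs A (A ∪ Bs) ((A ∪ Bs) ∪ {x | x ∈ [b']})
      Set.subset_union_left Set.subset_union_left
  -- decompose the right-hand side via the append lemma
  have hR : IndTT Ind (bs ++ [b']) A cs ↔
      IndTT Ind bs A cs ∧ IndTT Ind [b'] (A ∪ Bs) cs := by
    unfold IndTT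
    rw [indTuple_append]
    have h3 : A ∪ Cs ∪ Bs = (A ∪ Bs) ∪ Cs := by
      ext x; simp [or_comm, or_assoc, or_left_comm]
    rw [h3]
  rw [hL, hR, hsymm bs cs A hb hc, hsymm1 b' cs (A ∪ Bs)]
end
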